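/- Let G be the group with underlying set k^× × K₁ × K₂, where K₂ = Hom(K₁, k^×), K₁ a finite abelian group of type (d₁,…,d_p), with multiplication (α,x₁,x₂)·(β,y₁,y₂) = (αβ⟨x₁,y₂⟩, x₁+y₁, x₂+y₂). For each integer n, every nonzero weight-n G-module admits a G-submodule of dimension D_n = (d₁⋯d_p)/(gcd(n,d₁)⋯gcd(n,d_p)). -/

import Mathlib

abbrev ThetaK1 (p : ℕ) (d : Fin p → ℕ) : Type := ∀ i : Fin p, Multiplicative (ZMod (d i))

abbrev ThetaK2 (k : Type) [Field k] (p : ℕ) (d : Fin p → ℕ) : Type := ThetaK1 p d →* kˣ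

def Heis (k : Type) [Field k] (p : ℕ) (d : Fin p → ℕ) : Type :=
  kˣ × ThetaK1 p d × ThetaK2 k p d

namespace Heis

variable {k : Type} [Field k] {p : ℕ} {d : Fin p → ℕ}

def mk (α : kˣ) (x : ThetaK1 p d) (χ : ThetaK2 k p d) : Heis k p d := (α, x, χ)

instance : Mul (Heis k p d) :=
  ⟨fun a b => (a.1 * b.1 * b.2.2 a.2.1, a.2.1 * b.2.1, a.2.2 * b.2.2)⟩

instance : One (Heis k p d) := ⟨((1 : kˣ), 1, 1)⟩

instance : Inv (Heis k p d) := ⟨fun a => (a.1⁻¹ * a.2.2 a.2.1, a.2.1⁻¹, a.2.2⁻¹)⟩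

theorem mul_def (a b : Heis k p d) :
    a * b = (a.1 * b.1 * b.2.2 a.2.1, a.2.1 * b.2.1, a.2.2 * b.2.2) := rfl

theorem one_def : (1 : Heis k p d) = ((1 : kˣ), 1, 1) := rfl

theorem inv_def (a : Heis k p d) :
    a⁻¹ = (a.1⁻¹ * a.2.2 a.2.1, a.2.1⁻¹, a.2.2⁻¹) := rfl

theorem mul_assoc' (a b c : Heis k p d) : a * b * c = a * (b * c) := by
  obtain ⟨α, x, χ⟩ := a
  obtain ⟨β, y, ψ⟩ := b
  obtain ⟨γ, z, ω⟩ := c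
  refine Prod.ext ?_ (Prod.ext ?_ ?_)
  · show α * β * ψ x * γ * (ω (x * y)) = α * (β * γ * ω y) * ((ψ * ω) x)
    simp [map_mul, MonoidHom.mul_apply, mul_assoc, mul_comm, mul_left_comm]
  · exact mul_assoc x y z
  · exact mul_assoc χ ψ ω

theorem one_mul' (a : Heis k p d) : 1 * a = a := by
  obtain ⟨α, x, χ⟩ := a
  refine Prod.ext ?_ (Prod.ext ?_ ?_)
  · show 1 * α * χ 1 = α
    simp
  · exact one_mul x
  · exact one_mul χ

theorem mul_one' (a : Heis k p d) : a * 1 = a := by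
  obtain ⟨α, x, χ⟩ := a
  refine Prod.ext ?_ (Prod.ext ?_ ?_)
  · show α * 1 * (1 : ThetaK2 k p d) x = α
    simp
  · exact mul_one x
  · exact mul_one χ

theorem inv_mul_cancel' (a : Heis k p d) : a⁻¹ * a = 1 := by
  obtain ⟨α, x, χ⟩ := a
  refine Prod.ext ?_ (Prod.ext ?_ ?_)
  · show α⁻¹ * χ x * α * χ (x⁻¹) = 1
    simp [map_inv, mul_comm, mul_left_comm]
  · exact inv_mul_cancel x
  · exact inv_mul_cancel χ

instance : Group (Heis k p d) where
  mul_assoc := mul_assoc'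
  one_mul := one_mul'
  mul_one := mul_one'
  inv_mul_cancel := inv_mul_cancel'

/-- The multiplication rule of the Heisenberg-type group. -/
theorem mk_mul (α β : kˣ) (x y : ThetaK1 p d) (χ ψ : ThetaK2 k p d) :
    mk α x χ * mk β y ψ = mk (α * β * ψ x) (x * y) (χ * ψ) := rfl

end Heis

section Reps

variable {k : Type} [Field k]

/-- A subspace stable under a representation. -/
def RepStable {G V : Type} [Group G] [AddCommGroup V] [Module k V]
    (ρ : G →* (V →ₗ[k] V)ˣ) (W : Submodule k V) : Prop :=
  ∀ (g : G), ∀ w ∈ W, (ρ g : V →ₗ[k] V) w ∈ W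

/-- Irreducibility: nonzero and no nontrivial stable subspace. -/
def RepIrred {G V : Type} [Group G] [AddCommGroup V] [Module k V]
    (ρ : G →* (V →ₗ[k] V)ˣ) : Prop :=
  (∃ v : V, v ≠ 0) ∧
  ∀ W : Submodule k V, RepStable ρ W → W = ⊥ ∨ W = ⊤

/-- Isomorphism of representations of `G`. -/
def RepIso {G V W : Type} [Group G] [AddCommGroup V] [Module k V]
    [AddCommGroup W] [Module k W]
    (ρ : G →* (V →ₗ[k] V)ˣ) (τ : G →* (W →ₗ[k] W)ˣ) : Prop :=
  ∃ e : V ≃ₗ[k] W, ∀ (g : G) (v : V), e ((ρ g : V →ₗ[k] V) v) = (τ g : W →ₗ[k] W) (e v)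

variable {p : ℕ} {d : Fin p → ℕ}

/-- A representation of the Heisenberg-type group has weight `n` if `kˣ ⊆ G` acts through the
character `α ↦ αⁿ`. -/
def IsWeight (n : ℤ) {V : Type} [AddCommGroup V] [Module k V]
    (ρ : Heis k p d →* (V →ₗ[k] V)ˣ) : Prop :=
  ∀ (α : kˣ) (v : V), (ρ (Heis.mk α 1 1) : V →ₗ[k] V) v = ((α ^ n : kˣ) : k) • v

/-- `D n = (d₁⋯d_p)/(gcd(n,d₁)⋯gcd(n,d_p))`. -/
def ThetaD (p : ℕ) (d : Fin p → ℕ) (n : ℤ) : ℕ :=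
  (∏ i, d i) / ∏ i, Int.gcd n (d i)

end Reps

open Module in
lemma aux_common_eigenvector {k : Type} [Field k] [IsAlgClosed k] {ι : Type} (N : ℕ) :
    ∀ (V : Type) [AddCommGroup V] [Module k V] [FiniteDimensional k V],
      Module.finrank k V = N → Nontrivial V →
      ∀ f : ι → Module.End k V, (∀ i j, Commute (f i) (f j)) →
      ∃ (μ : ι → k) (v : V), v ≠ 0 ∧ ∀ i, f i v = μ i • v := by
  induction N using Nat.strong_induction_on with
  | _ N ih =>
    intro V _ _ _ hN hnt f hc
    by_cases h : ∃ i μ₀, Module.End.HasEigenvalue (f i) μ₀ ∧ Module.End.eigenspace (f i) μ₀ ≠ ⊤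
    · obtain ⟨i, μ₀, hev, hne⟩ := h
      set W := Module.End.eigenspace (f i) μ₀ with hW
      have hmap : ∀ j, Set.MapsTo (f j) W W := fun j =>
        Module.End.mapsTo_genEigenspace_of_comm (hc i j) μ₀ 1
      have hlt : Module.finrank k W < N := hN ▸ Submodule.finrank_lt hne
      have hntW : Nontrivial W := Submodule.nontrivial_iff_ne_bot.mpr hev
      obtain ⟨μ, v, hv0, hv⟩ := ih _ hlt W rfl hntW
        (fun j => (f j).restrict (fun x hx => hmap j hx))
        (fun a b => by
          ext ⟨w, hw⟩
          have h2 := DFunLike.congr_fun (hc a b) w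
          simp only [Module.End.mul_apply] at h2
          simp only [Module.End.mul_apply, LinearMap.restrict_coe_apply]
          exact h2)
      refine ⟨μ, (v : V), by simpa using hv0, fun j => ?_⟩
      have := congrArg (Subtype.val) (hv j)
      simpa [LinearMap.restrict_coe_apply] using this
    · push_neg at h
      obtain ⟨v, hv0⟩ := exists_ne (0 : V)
      choose μ hμ using fun i => Module.End.exists_eigenvalue (f i)
      refine ⟨μ, v, hv0, fun i => ?_⟩
      have : Module.End.eigenspace (f i) (μ i) = ⊤ := h i (μ i) (hμ i)
      have hv : v ∈ Module.End.eigenspace (f i) (μ i) := this ▸ Submodule.mem_top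
      exact Module.End.mem_eigenspace_iff.mp hv

lemma aux_linindep {k V : Type} [Field k] [AddCommGroup V] [Module k V]
    {ι κ : Type} (f : ι → Module.End k V) (hc : ∀ i j, Commute (f i) (f j))
    (c : κ → ι → k) (hinj : Function.Injective c)
    (w : κ → V) (hw0 : ∀ q, w q ≠ 0) (hev : ∀ q i, f i (w q) = c q i • w q) :
    LinearIndependent k w := by
  have hind := Module.End.independent_iInf_maxGenEigenspace_of_forall_mapsTo f
    (fun i j φ => Module.End.mapsTo_maxGenEigenspace_of_comm (hc j i) φ)
  have hind2 := hind.comp hinj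
  refine iSupIndep.linearIndependent _ hind2 (fun q => ?_) hw0
  refine (Submodule.mem_iInf _).mpr fun i => ?_
  rw [Module.End.mem_maxGenEigenspace]
  refine ⟨1, ?_⟩
  simp [pow_one, LinearMap.sub_apply, hev q i]

lemma aux_card_zsmul (m : ℕ) [NeZero m] (n : ℤ) :
    Nat.card {x : ZMod m // n • x = 0} = Int.gcd n m := by
  set c : ZMod m := (n : ZMod m) with hc
  set f : ZMod m →+ ZMod m := AddMonoidHom.mulLeft c with hf
  have h1 : Nat.card {x : ZMod m // n • x = 0} = Nat.card f.ker := by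
    refine Nat.card_congr (Equiv.subtypeEquivRight fun x => ?_)
    rw [AddMonoidHom.mem_ker]
    show n • x = 0 ↔ c * x = 0
    rw [zsmul_eq_mul]
  have hrange : f.range = AddSubgroup.zmultiples c := by
    ext x
    simp only [AddMonoidHom.mem_range, AddSubgroup.mem_zmultiples_iff]
    constructor
    · rintro ⟨y, rfl⟩
      obtain ⟨j, rfl⟩ := ZMod.intCast_surjective y
      exact ⟨j, by rw [zsmul_eq_mul, mul_comm]; rfl⟩
    · rintro ⟨j, rfl⟩
      exact ⟨(j : ZMod m), by rw [zsmul_eq_mul, mul_comm]; rfl⟩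
  have hcard : Nat.card (ZMod m) = Nat.card (ZMod m ⧸ f.ker) * Nat.card f.ker :=
    AddSubgroup.card_eq_card_quotient_mul_card_addSubgroup f.ker
  have hq : Nat.card (ZMod m ⧸ f.ker) = Nat.card f.range :=
    Nat.card_congr (QuotientAddGroup.quotientKerEquivRange f).toEquiv
  set a : ℕ := n.natAbs with ha
  have horder : addOrderOf c = m / m.gcd a := by
    rcases Int.natAbs_eq n with h | h
    · rw [hc, h, Int.cast_natCast, ZMod.addOrderOf_coe a (NeZero.ne m)]
    · rw [hc, h, Int.cast_neg, Int.cast_natCast, addOrderOf_neg,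
        ZMod.addOrderOf_coe a (NeZero.ne m)]
  have hrcard : Nat.card f.range = m / m.gcd a := by
    rw [hrange, Nat.card_zmultiples, horder]
  have hm : Nat.card (ZMod m) = m := by simp [Nat.card_eq_fintype_card, ZMod.card]
  have hgdvd : m.gcd a ∣ m := Nat.gcd_dvd_left m a
  have hq0 : m / m.gcd a ≠ 0 := by
    have : 0 < m.gcd a := Nat.gcd_pos_of_pos_left a (Nat.pos_of_ne_zero (NeZero.ne m))
    exact (Nat.div_ne_zero_iff).mpr ⟨this.ne', Nat.le_of_dvd (Nat.pos_of_ne_zero (NeZero.ne m)) hgdvd⟩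
  have key : m = (m / m.gcd a) * Nat.card f.ker := by
    conv_lhs => rw [← hm, hcard, hq, hrcard]
  have key2 : m = (m / m.gcd a) * m.gcd a := (Nat.div_mul_cancel hgdvd).symm
  have : Nat.card f.ker = m.gcd a :=
    Nat.eq_of_mul_eq_mul_left (Nat.pos_of_ne_zero hq0) (key.symm.trans key2)
  rw [h1, this, Int.gcd, Nat.gcd_comm, Int.natAbs_natCast]

lemma aux_card_ker (p : ℕ) (d : Fin p → ℕ) [∀ i, NeZero (d i)] (n : ℤ) :
    Nat.card {x : ∀ i : Fin p, Multiplicative (ZMod (d i)) // x ^ n = 1}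
      = ∏ i, Int.gcd n (d i) := by
  have e1 : {x : ∀ i : Fin p, Multiplicative (ZMod (d i)) // x ^ n = 1} ≃
      ∀ i, {y : Multiplicative (ZMod (d i)) // y ^ n = 1} :=
    (Equiv.subtypeEquivRight (fun x => by
        constructor
        · intro h i; exact congrFun h i
        · intro h; funext i; exact h i)).trans (Equiv.subtypePiEquivPi)
  rw [Nat.card_congr e1, Nat.card_pi]
  refine Finset.prod_congr rfl fun i _ => ?_
  have e2 : {y : Multiplicative (ZMod (d i)) // y ^ n = 1} ≃ {z : ZMod (d i) // n • z = 0} :=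
    Equiv.subtypeEquiv Multiplicative.toAdd (fun y => by
      rw [← toAdd_zpow]
      exact ⟨fun h => by simp [h], fun h => Multiplicative.toAdd.injective (by simpa using h)⟩)
  rw [Nat.card_congr e2, aux_card_zsmul]
/-- Let `G = kˣ × K₁ × K₂` be the Heisenberg-type group of type
`(d₁,…,d_p)` (so `K₁ = ⊕ᵢ ℤ/dᵢ`, `K₂ = Hom(K₁,kˣ)`, `d₁ ∣ d₂ ∣ ⋯ ∣ d_p`, `char k ∤ dᵢ`,
`k` algebraically closed).  For each integer `n`, every nonzero weight-`n` `G`-module admits a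
`G`-submodule of dimension `D_n = (d₁⋯d_p)/(gcd(n,d₁)⋯gcd(n,d_p))`. -/
theorem stmt5 {k : Type} [Field k] [IsAlgClosed k] {p : ℕ} {d : Fin p → ℕ}
    (hd0 : ∀ i, 0 < d i) (hchain : ∀ i j : Fin p, i ≤ j → d i ∣ d j)
    (hchar : ∀ i, ¬ (ringChar k ∣ d i))
    (n : ℤ) (V : Type) [AddCommGroup V] [Module k V] [FiniteDimensional k V]
    (ρ : Heis k p d →* (V →ₗ[k] V)ˣ)
    (hw : IsWeight n ρ) (hV : ∃ v : V, v ≠ 0) :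
    ∃ W : Submodule k V, RepStable ρ W ∧ Module.finrank k ↥W = ThetaD p d n := by
  classical
  haveI hnz : ∀ i, NeZero (d i) := fun i => ⟨(hd0 i).ne'⟩
  obtain ⟨v₀, hv₀⟩ := hV
  haveI : Nontrivial V := ⟨⟨v₀, 0, hv₀⟩⟩
  set A : ThetaK1 p d → Heis k p d := fun y => Heis.mk 1 y 1 with hA_def
  set B : ThetaK2 k p d → Heis k p d := fun χ => Heis.mk 1 1 χ with hB_def
  set Z : kˣ → Heis k p d := fun α => Heis.mk α 1 1 with hZ_def
  set π : Heis k p d → Module.End k V := fun g => (ρ g : V →ₗ[k] V) with hπ_def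
  have hπ : ∀ g h : Heis k p d, π (g * h) = π g * π h := fun g h => by
    simp only [hπ_def, map_mul, Units.val_mul]
  have hπ1 : π 1 = 1 := by simp [hπ_def]
  have hπinj : ∀ (g : Heis k p d) (x : V), π g x = 0 → x = 0 := by
    intro g x hx
    have h1 : π (g⁻¹ * g) x = x := by rw [inv_mul_cancel, hπ1]; rfl
    rw [hπ, Module.End.mul_apply, hx, map_zero] at h1
    exact h1.symm
  have hA : ∀ y y', A y * A y' = A (y * y') := by
    intro y y'
    refine Prod.ext ?_ (Prod.ext ?_ ?_)
    · show (1 : kˣ) * 1 * (1 : ThetaK2 k p d) y = 1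
      simp
    · rfl
    · show (1 : ThetaK2 k p d) * 1 = 1
      exact MonoidHom.ext fun y => mul_one 1
  have hB : ∀ χ χ', B χ * B χ' = B (χ * χ') := by
    intro χ χ'
    refine Prod.ext ?_ (Prod.ext ?_ ?_)
    · show (1 : kˣ) * 1 * χ' (1 : ThetaK1 p d) = 1
      simp
    · show (1 : ThetaK1 p d) * 1 = 1
      exact one_mul 1
    · rfl
  have hA1 : A 1 = 1 := rfl
  have hB1 : B 1 = 1 := rfl
  have hAB : ∀ y χ, A y * B χ = Z (χ y) * (B χ * A y) := by
    intro y χ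
    refine Prod.ext ?_ (Prod.ext ?_ ?_)
    · show (1 : kˣ) * 1 * χ y
        = χ y * ((1 : kˣ) * 1 * (1 : ThetaK2 k p d) (1 : ThetaK1 p d))
          * ((χ * 1) (1 : ThetaK1 p d))
      simp
    · show y * 1 = 1 * (1 * y)
      rw [mul_one y, one_mul y, one_mul y]
    · show (1 : ThetaK2 k p d) * χ = 1 * (χ * 1)
      rw [mul_one χ]
  have hwπ : ∀ (α : kˣ) (x : V), π (Z α) x = ((α ^ n : kˣ) : k) • x := fun α x => hw α x
  have hdec : ∀ g : Heis k p d, g = Z (g.1 * (g.2.2 g.2.1)⁻¹) * (A g.2.1 * B g.2.2) := by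
    intro g
    obtain ⟨α, x, χ⟩ := g
    show (α, x, χ) = _
    refine Prod.ext ?_ (Prod.ext ?_ ?_)
    · show α = α * (χ x)⁻¹ * ((1 : kˣ) * 1 * χ x) * (((1 : ThetaK2 k p d) * χ) (1 : ThetaK1 p d))
      simp [mul_assoc]
    · show x = 1 * (x * 1)
      rw [one_mul (x * 1), mul_one x]
    · show χ = 1 * ((1 : ThetaK2 k p d) * χ)
      exact ((one_mul ((1 : ThetaK2 k p d) * χ)).trans (one_mul χ)).symm
  -- the kernel subgroup
  have hzpow_apply : ∀ (χ : ThetaK2 k p d) (m : ℤ) (y : ThetaK1 p d),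
      (χ ^ m) y = χ y ^ m := fun χ m y => rfl
  set NN : Subgroup (ThetaK2 k p d) :=
    { carrier := {ν : ThetaK2 k p d | ∀ y, (ν y) ^ n = 1}
      one_mem' := by
        intro y
        show ((1 : ThetaK2 k p d) y) ^ n = 1
        rw [MonoidHom.one_apply, one_zpow]
      mul_mem' := by
        intro a b ha hb y
        show ((a * b) y) ^ n = 1
        rw [MonoidHom.mul_apply, mul_zpow, ha y, hb y, one_mul]
      inv_mem' := by
        intro a ha y
        show ((a⁻¹ : ThetaK2 k p d) y) ^ n = 1
        rw [MonoidHom.inv_apply, inv_zpow, ha y, inv_one] } with hNN_def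
  have hmemNN : ∀ ν : ThetaK2 k p d, ν ∈ NN ↔ ∀ y, (ν y) ^ n = 1 := fun ν => Iff.rfl
  haveI hNNnormal : NN.Normal := ⟨fun a ha g => by rw [mul_comm g a]; exact (mul_inv_cancel_right a g).symm ▸ ha⟩
  -- the commuting family
  set f : (ThetaK1 p d ⊕ NN) → Module.End k V :=
    Sum.elim (fun y => π (A y)) (fun ν : NN => π (B (ν : ThetaK2 k p d))) with hf_def
  have hABcomm : ∀ (y : ThetaK1 p d) (ν : ThetaK2 k p d), (∀ y', (ν y') ^ n = 1) →
      π (A y) * π (B ν) = π (B ν) * π (A y) := by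
    intro y ν hν
    rw [← hπ, ← hπ, hAB]
    refine LinearMap.ext fun x => ?_
    rw [hπ (Z (ν y)) (B ν * A y), Module.End.mul_apply, hwπ, hν y]
    simp
  have hcomm : ∀ i j, Commute (f i) (f j) := by
    rintro (y | ν) (y' | ν')
    · show π (A y) * π (A y') = π (A y') * π (A y)
      rw [← hπ, ← hπ, hA, hA, mul_comm]
    · exact hABcomm y ν' ((hmemNN _).mp ν'.2)
    · exact (hABcomm y' ν ((hmemNN _).mp ν.2)).symm
    · show π (B ν) * π (B ν') = π (B ν') * π (B ν)
      rw [← hπ, ← hπ, hB, hB]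
      exact congrArg π (congrArg B (MonoidHom.ext fun y =>
        mul_comm ((ν : ThetaK2 k p d) y) ((ν' : ThetaK2 k p d) y)))
  obtain ⟨μ, v, hv0, heig⟩ :=
    aux_common_eigenvector (Module.finrank k V) V rfl this f hcomm
  set lam : ThetaK1 p d → k := fun y => μ (Sum.inl y) with hlam_def
  have heigA : ∀ y, π (A y) v = lam y • v := fun y => heig (Sum.inl y)
  have heigB : ∀ ν : NN, π (B (ν : ThetaK2 k p d)) v = μ (Sum.inr ν) • v :=
    fun ν => heig (Sum.inr ν)
  have hlam0 : ∀ y, lam y ≠ 0 := by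
    intro y h0
    exact hv0 (hπinj (A y) v (by rw [heigA, h0, zero_smul]))
  -- the vectors
  set Q := ThetaK2 k p d ⧸ NN with hQ_def
  have hout : ∀ q : Q, (QuotientGroup.mk q.out : Q) = q := fun q => Quotient.out_eq' q
  set w : Q → V := fun q => π (B q.out) v with hw_def
  have hw0 : ∀ q, w q ≠ 0 := by
    intro q h0
    refine hv0 (hπinj (B q.out) v h0)
  have heigw : ∀ (q : Q) (y : ThetaK1 p d),
      π (A y) (w q) = (((q.out y ^ n : kˣ) : k) * lam y) • w q := by
    intro q y
    have : π (A y) (π (B q.out) v) = π (A y * B q.out) v := by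
      rw [hπ, Module.End.mul_apply]
    rw [hw_def]
    rw [this, hAB, hπ (Z (q.out y)) (B q.out * A y), Module.End.mul_apply, hwπ,
      hπ, Module.End.mul_apply, heigA, map_smul, smul_smul]
  set c : Q → ThetaK1 p d → k := fun q y => ((q.out y ^ n : kˣ) : k) * lam y with hc_def
  have hcinj : Function.Injective c := by
    intro q q' h
    have h3 : ∀ y, (q.out y) ^ n = (q'.out y) ^ n := by
      intro y
      have h2 := congrFun h y
      simp only [hc_def] at h2
      exact Units.ext (mul_right_cancel₀ (hlam0 y) h2)
    have h5 : (q.out⁻¹ * q'.out : ThetaK2 k p d) ∈ NN := by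
      intro y
      show ((q.out⁻¹ * q'.out : ThetaK2 k p d) y) ^ n = 1
      have hy : (q.out⁻¹ * q'.out : ThetaK2 k p d) y = (q.out y)⁻¹ * q'.out y := rfl
      rw [hy, mul_zpow, ← h3 y, inv_zpow, inv_mul_cancel]
    have h6 : (QuotientGroup.mk q.out : Q) = QuotientGroup.mk q'.out :=
      (QuotientGroup.eq ..).mpr h5
    rw [hout, hout] at h6
    exact h6
  -- linear independence
  have hlin : LinearIndependent k w := by
    refine aux_linindep (fun y => π (A y)) (fun y y' => ?_) c hcinj w hw0
      (fun q y => heigw q y)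
    show π (A y) * π (A y') = π (A y') * π (A y)
    rw [← hπ, ← hπ, hA, hA, mul_comm]
  set W : Submodule k V := Submodule.span k (Set.range w) with hW_def
  -- helper for stability
  have hmapW : ∀ g : Heis k p d, (∀ q, π g (w q) ∈ W) → ∀ x ∈ W, π g x ∈ W := by
    intro g hg x hx
    have hle : W.map (π g) ≤ W := by
      rw [hW_def, Submodule.map_span, Submodule.span_le]
      rintro _ ⟨_, ⟨q, rfl⟩, rfl⟩
      exact hg q
    exact hle ⟨x, hx, rfl⟩
  have hwmem : ∀ q, w q ∈ W := fun q => Submodule.subset_span ⟨q, rfl⟩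
  have hBstab : ∀ (ψ : ThetaK2 k p d) (x : V), x ∈ W → π (B ψ) x ∈ W := by
    intro ψ x hx
    refine hmapW (B ψ) (fun q => ?_) x hx
    set q' : Q := QuotientGroup.mk ψ * q with hq'_def
    set ν : ThetaK2 k p d := q'.out⁻¹ * (ψ * q.out) with hν_def
    have hν : ν ∈ NN := by
      have : (QuotientGroup.mk ν : Q) = 1 := by
        rw [hν_def]
        rw [QuotientGroup.mk_mul, QuotientGroup.mk_mul, QuotientGroup.mk_inv, hout, hout,
          hq'_def]
        group
      exact (QuotientGroup.eq_one_iff ν).mp this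
    have hsplit : B ψ * B q.out = B q'.out * B ν := by
      rw [hB, hB]
      refine congrArg B (MonoidHom.ext fun y => ?_)
      show (ψ * q.out : ThetaK2 k p d) y = (q'.out * (q'.out⁻¹ * (ψ * q.out)) : ThetaK2 k p d) y
      show (ψ * q.out : ThetaK2 k p d) y
        = q'.out y * ((q'.out y)⁻¹ * (ψ * q.out : ThetaK2 k p d) y)
      rw [mul_inv_cancel_left]
    have : π (B ψ) (w q) = π (B ψ * B q.out) v := by
      rw [hw_def, hπ, Module.End.mul_apply]
    rw [this, hsplit, hπ, Module.End.mul_apply, heigB ⟨ν, hν⟩]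
    rw [map_smul]
    exact W.smul_mem _ (hwmem q')
  have hAstab : ∀ (y : ThetaK1 p d) (x : V), x ∈ W → π (A y) x ∈ W := by
    intro y x hx
    refine hmapW (A y) (fun q => ?_) x hx
    rw [heigw]
    exact W.smul_mem _ (hwmem q)
  have hZstab : ∀ (α : kˣ) (x : V), x ∈ W → π (Z α) x ∈ W := by
    intro α x hx
    rw [hwπ]
    exact W.smul_mem _ hx
  have hstab : RepStable ρ W := by
    intro g x hx
    show π g x ∈ W
    rw [hdec g, hπ, hπ, Module.End.mul_apply, Module.End.mul_apply]
    exact hZstab _ _ (hAstab _ _ (hBstab _ _ hx))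
  -- cardinality computations
  have hK1card : Nat.card (ThetaK1 p d) = ∏ i, d i := by
    rw [Nat.card_pi]
    exact Finset.prod_congr rfl fun i _ => by
      simp [Nat.card_eq_fintype_card, ZMod.card]
  haveI : Finite (ThetaK1 p d) := by infer_instance
  have hexp : ((Monoid.exponent (ThetaK1 p d) : k)) ≠ 0 := by
    have hdvd : Monoid.exponent (ThetaK1 p d) ∣ ∏ i, d i := by
      rw [← hK1card, Nat.card_eq_fintype_card]
      exact Group.exponent_dvd_card
    obtain ⟨t, ht⟩ := hdvd
    have hprod : ((∏ i, d i : ℕ) : k) ≠ 0 := by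
      rw [Nat.cast_prod]
      refine Finset.prod_ne_zero_iff.mpr fun i _ => ?_
      intro h0
      exact hchar i ((CharP.cast_eq_zero_iff k (ringChar k) (d i)).mp h0)
    intro h0
    apply hprod
    rw [ht, Nat.cast_mul, h0, zero_mul]
  haveI : NeZero ((Monoid.exponent (ThetaK1 p d) : k)) := ⟨hexp⟩
  obtain ⟨e⟩ := CommGroup.monoidHom_mulEquiv_of_hasEnoughRootsOfUnity (ThetaK1 p d) k
  haveI : Finite (ThetaK2 k p d) := Finite.of_equiv _ e.toEquiv.symm
  haveI : Fintype Q := Fintype.ofFinite Q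
  have hfr : Module.finrank k W = Fintype.card Q := finrank_span_eq_card hlin
  have hK2card : Nat.card (ThetaK2 k p d) = ∏ i, d i := by
    rw [Nat.card_congr e.toEquiv, hK1card]
  have hNNcard : Nat.card NN = ∏ i, Int.gcd n (d i) := by
    have e1 : NN ≃ {χ : ThetaK2 k p d // χ ^ n = 1} :=
      Equiv.subtypeEquivRight fun χ =>
        ⟨fun h => MonoidHom.ext fun y => (hzpow_apply χ n y).trans (h y),
         fun h y => (hzpow_apply χ n y).symm.trans
           ((DFunLike.congr_fun h y).trans rfl)⟩
    have hiff : ∀ χ : ThetaK2 k p d, χ ^ n = 1 ↔ (e χ) ^ n = 1 := fun χ => by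
      rw [← map_zpow e χ n]
      exact ⟨fun h => by rw [h, map_one], fun h => e.injective (by rw [h, map_one])⟩
    have e2 : {χ : ThetaK2 k p d // χ ^ n = 1} ≃ {x : ThetaK1 p d // x ^ n = 1} :=
      Equiv.subtypeEquiv e.toEquiv hiff
    rw [Nat.card_congr (e1.trans e2)]
    exact aux_card_ker p d n
  have hgcd0 : (∏ i, Int.gcd n (d i)) ≠ 0 := by
    refine Finset.prod_ne_zero_iff.mpr fun i _ => ?_
    simp [Int.gcd_eq_zero_iff, (hd0 i).ne']
  have hQcard : Nat.card Q = ThetaD p d n := by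
    have hlag : Nat.card (ThetaK2 k p d) = Nat.card Q * Nat.card NN :=
      Subgroup.card_eq_card_quotient_mul_card_subgroup NN
    rw [hK2card, hNNcard] at hlag
    rw [ThetaD, hlag, Nat.mul_div_cancel _ (Nat.pos_of_ne_zero hgcd0)]
  refine ⟨W, hstab, ?_⟩
  rw [hfr, ← Nat.card_eq_fintype_card, hQcard]
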